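/- Let σ : Y^M → S be both 1-unambiguous and M-unambiguous, with |Y| = c. Then for any classifier f, R^{01}(f) ≤ R_P(f;σ) / (1 − (c^{2M-2} R_P(f;σ))^{1/M})^{M−1}, whenever the denominator is positive. In particular R^{01}(f) = O(R_P(f;σ)) as R_P(f;σ) → 0. -/

import Mathlib

open scoped ENNReal

lemma my_tsum_pi_prod {Z : Type*} : ∀ (M : ℕ) (g : Fin M → Z → ℝ≥0∞),
    ∑' w : Fin M → Z, ∏ i, g i (w i) = ∏ i, ∑' z, g i z
  | 0, g => by
      haveI : Unique (Fin 0 → Z) := ⟨⟨fun i => i.elim0⟩, fun a => funext fun i => i.elim0⟩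
      simp [tsum_eq_single (default : Fin 0 → Z) (fun b hb => absurd (Unique.eq_default b) hb)]
  | (n+1), g => by
      rw [← (Fin.consEquiv (fun _ : Fin (n+1) => Z)).tsum_eq (fun w => ∏ i, g i (w i))]
      have h1 : ∀ p : Z × (Fin n → Z),
          (fun w => ∏ i, g i (w i)) ((Fin.consEquiv (fun _ : Fin (n+1) => Z)) p)
          = g 0 p.1 * ∏ i : Fin n, g i.succ (p.2 i) := by
        intro p
        simp [Fin.consEquiv, Fin.prod_univ_succ]
      simp_rw [h1]
      rw [ENNReal.tsum_prod']
      simp_rw [ENNReal.tsum_mul_left]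
      rw [ENNReal.tsum_mul_right, my_tsum_pi_prod n (fun i => g i.succ), Fin.prod_univ_succ]

lemma my_nnreal_pow_sum {ι : Type*} (s : Finset ι) (q : ι → NNReal) (n : ℕ) :
    (∑ i ∈ s, q i) ^ (n + 1) ≤ (s.card : NNReal) ^ n * ∑ i ∈ s, q i ^ (n + 1) := by
  have h := pow_sum_le_card_mul_sum_pow (s := s) (f := fun i => (q i : ℝ))
    (fun i _ => (q i).coe_nonneg) n
  exact_mod_cast h

lemma my_ennreal_pow_sum {ι : Type*} (s : Finset ι) (q : ι → ℝ≥0∞)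
    (hfin : ∀ i ∈ s, q i ≠ ∞) (n : ℕ) :
    (∑ i ∈ s, q i) ^ (n + 1) ≤ (s.card : ℝ≥0∞) ^ n * ∑ i ∈ s, q i ^ (n + 1) := by
  have hq : ∀ i ∈ s, q i = ((q i).toNNReal : ℝ≥0∞) := fun i hi =>
    (ENNReal.coe_toNNReal (hfin i hi)).symm
  calc (∑ i ∈ s, q i) ^ (n + 1)
      = ((∑ i ∈ s, (q i).toNNReal : NNReal) : ℝ≥0∞) ^ (n + 1) := by
        rw [ENNReal.coe_finset_sum]; congr 1; exact Finset.sum_congr rfl hq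
    _ ≤ (((s.card : NNReal) ^ n * ∑ i ∈ s, (q i).toNNReal ^ (n + 1) : NNReal) : ℝ≥0∞) := by
        rw [← ENNReal.coe_pow]
        exact_mod_cast ENNReal.coe_le_coe.2 (my_nnreal_pow_sum s (fun i => (q i).toNNReal) n)
    _ = (s.card : ℝ≥0∞) ^ n * ∑ i ∈ s, q i ^ (n + 1) := by
        push_cast [ENNReal.coe_finset_sum]
        congr 1
        exact Finset.sum_congr rfl (fun i hi => by rw [hq i hi]; norm_cast)

theorem stmt3 {X Y S : Type*} [Fintype Y] [DecidableEq Y] [DecidableEq S]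
    (c M : ℕ) (hc : Fintype.card Y = c) (hM : 1 ≤ M)
    (σ : (Fin M → Y) → S)
    (hσM : ∀ y y' : Y, y ≠ y' → σ (fun _ => y) ≠ σ (fun _ => y'))
    (hσ1 : ∃ i : Fin M, ∀ (y : Fin M → Y) (l' : Y), l' ≠ y i →
      σ (Function.update y i l') ≠ σ y)
    (D : PMF (X × Y)) (f : X → Y)
    (R01 RP : ℝ≥0∞)
    (hR01 : R01 = ∑' z : X × Y, if f z.1 ≠ z.2 then D z else 0)
    (hRP : RP = ∑' w : Fin M → X × Y,
        (∏ i, D (w i)) *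
          (if σ (fun i => f (w i).1) ≠ σ (fun i => (w i).2) then 1 else 0))
    (hden : ((c : ℝ≥0∞) ^ (2 * M - 2) * RP) ^ ((M : ℝ)⁻¹) < 1) :
    R01 ≤ RP / (1 - ((c : ℝ≥0∞) ^ (2 * M - 2) * RP) ^ ((M : ℝ)⁻¹)) ^ (M - 1) := by
  obtain ⟨m, rfl⟩ : ∃ m, M = m + 1 := ⟨M - 1, (Nat.succ_pred_eq_of_pos hM).symm⟩
  obtain ⟨i₀, hi₀⟩ := hσ1
  set B : ℝ≥0∞ := ((c : ℝ≥0∞) ^ (2 * (m+1) - 2) * RP) ^ (((m+1 : ℕ) : ℝ))⁻¹ with hB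
  set Q : ℝ≥0∞ := ∑' z : X × Y, if f z.1 = z.2 then D z else 0 with hQ
  set q : Y × Y → ℝ≥0∞ :=
    fun p => ∑' z : X × Y, if z.2 = p.1 ∧ f z.1 = p.2 then D z else 0 with hq
  set s : Finset (Y × Y) := Finset.univ.filter (fun p => p.1 ≠ p.2) with hs
  -- Step A : Q + R01 = 1
  have hA : Q + R01 = 1 := by
    rw [hQ, hR01, ← ENNReal.tsum_add, ← D.tsum_coe]
    refine tsum_congr fun z => ?_
    by_cases h : f z.1 = z.2 <;> simp [h]
  -- q p is finite and ≤ 1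
  have hq_le : ∀ p, q p ≤ 1 := by
    intro p
    rw [hq, ← D.tsum_coe]
    exact ENNReal.tsum_le_tsum fun z => by split_ifs <;> simp
  -- Step B : R01 = ∑ p ∈ s, q p
  have hBsum : R01 = ∑ p ∈ s, q p := by
    rw [hR01, hq, ← Summable.tsum_finsetSum (fun i _ => ENNReal.summable)]
    refine tsum_congr fun z => ?_
    have hiff : ∀ p : Y × Y, (z.2 = p.1 ∧ f z.1 = p.2) ↔ p = (z.2, f z.1) := by
      intro p
      constructor
      · rintro ⟨h1, h2⟩; exact Prod.ext h1.symm h2.symm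
      · rintro rfl; exact ⟨rfl, rfl⟩
    simp_rw [hiff]
    rw [Finset.sum_ite_eq' s (z.2, f z.1) (fun _ => (D z : ℝ≥0∞))]
    have : (z.2, f z.1) ∈ s ↔ f z.1 ≠ z.2 := by
      simp [hs, ne_comm]
    by_cases h : f z.1 ≠ z.2
    · rw [if_pos (this.mpr h), if_pos h]
    · rw [if_neg (fun hm => h (this.mp hm)), if_neg h]
  -- Step C : ∑ p ∈ s, (q p)^(m+1) ≤ RP
  have hC : ∑ p ∈ s, (q p) ^ (m+1) ≤ RP := by
    have hpow : ∀ p : Y × Y, (q p) ^ (m+1) =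
        ∑' w : Fin (m+1) → X × Y,
          ∏ i, (D (w i) * if (w i).2 = p.1 ∧ f (w i).1 = p.2 then 1 else 0) := by
      intro p
      rw [my_tsum_pi_prod (m+1)
        (fun _ z => D z * if z.2 = p.1 ∧ f z.1 = p.2 then 1 else 0)]
      rw [Finset.prod_const, Finset.card_univ, Fintype.card_fin]
      congr 1
      rw [hq]
      refine tsum_congr fun z => ?_
      split_ifs <;> simp
    simp_rw [hpow]
    rw [← Summable.tsum_finsetSum (fun i _ => ENNReal.summable)]
    rw [hRP]
    refine ENNReal.tsum_le_tsum fun w => ?_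
    -- pointwise bound
    have hfac : ∀ p : Y × Y,
        (∏ i, (D (w i) * if (w i).2 = p.1 ∧ f (w i).1 = p.2 then 1 else 0)) =
        if (∀ i, (w i).2 = p.1 ∧ f (w i).1 = p.2) then ∏ i, (D (w i) : ℝ≥0∞) else 0 := by
      intro p
      by_cases h : ∀ i, (w i).2 = p.1 ∧ f (w i).1 = p.2
      · rw [if_pos h]
        exact Finset.prod_congr rfl fun i _ => by rw [if_pos (h i), mul_one]
      · rw [if_neg h]
        obtain ⟨i, hi⟩ := not_forall.mp h
        refine Finset.prod_eq_zero (Finset.mem_univ i) ?_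
        rw [if_neg hi, mul_zero]
    simp_rw [hfac]
    by_cases hex : ∃ p ∈ s, ∀ i, (w i).2 = p.1 ∧ f (w i).1 = p.2
    · obtain ⟨p₀, hp₀s, hp₀⟩ := hex
      have huniq : ∀ p : Y × Y, (∀ i, (w i).2 = p.1 ∧ f (w i).1 = p.2) → p = p₀ := by
        intro p hp
        have h1 := hp 0
        have h2 := hp₀ 0
        exact Prod.ext (h1.1.symm.trans h2.1) (h1.2.symm.trans h2.2)
      rw [Finset.sum_eq_single_of_mem p₀ hp₀s
        (fun b _ hb => if_neg (fun hall => hb (huniq b hall)))]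
      rw [if_pos hp₀]
      have hmis : σ (fun i => f (w i).1) ≠ σ (fun i => (w i).2) := by
        have hpred : (fun i => f (w i).1) = (fun _ : Fin (m+1) => p₀.2) :=
          funext fun i => (hp₀ i).2
        have htrue : (fun i => (w i).2) = (fun _ : Fin (m+1) => p₀.1) :=
          funext fun i => (hp₀ i).1
        rw [hpred, htrue]
        have hne : p₀.1 ≠ p₀.2 := by simpa [hs] using hp₀s
        exact hσM p₀.2 p₀.1 (Ne.symm hne)
      rw [if_pos hmis, mul_one]
    · rw [Finset.sum_eq_zero fun p hp => if_neg (fun hall => hex ⟨p, hp, hall⟩)]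
      exact zero_le
  -- Step D : R01 * Q^m ≤ RP
  have hD : R01 * Q ^ m ≤ RP := by
    have heq : R01 * Q ^ m =
        ∑' w : Fin (m+1) → X × Y,
          ∏ i, (D (w i) *
            if i = i₀ then (if f (w i).1 ≠ (w i).2 then 1 else 0)
            else (if f (w i).1 = (w i).2 then 1 else 0)) := by
      rw [my_tsum_pi_prod (m+1)
        (fun i z => D z *
          if i = i₀ then (if f z.1 ≠ z.2 then 1 else 0)
          else (if f z.1 = z.2 then 1 else 0))]
      have hfac : ∀ i : Fin (m+1),
          (∑' z : X × Y, D z *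
            if i = i₀ then (if f z.1 ≠ z.2 then (1:ℝ≥0∞) else 0)
            else (if f z.1 = z.2 then 1 else 0)) = if i = i₀ then R01 else Q := by
        intro i
        by_cases h : i = i₀
        · rw [if_pos h, hR01]
          refine (tsum_congr fun z => ?_).symm
          rw [if_pos h]; split_ifs <;> simp
        · rw [if_neg h, hQ]
          refine (tsum_congr fun z => ?_).symm
          rw [if_neg h]; split_ifs <;> simp
      rw [Finset.prod_congr rfl (fun i _ => hfac i)]
      rw [← Finset.mul_prod_erase Finset.univ _ (Finset.mem_univ i₀), if_pos rfl]
      congr 1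
      rw [Finset.prod_congr rfl
        (fun j hj => if_neg (Finset.ne_of_mem_erase hj))]
      rw [Finset.prod_const, Finset.card_erase_of_mem (Finset.mem_univ i₀),
        Finset.card_univ, Fintype.card_fin, Nat.add_sub_cancel]
    rw [heq, hRP]
    refine ENNReal.tsum_le_tsum fun w => ?_
    rw [Finset.prod_mul_distrib]
    refine mul_le_mul_right ?_ _
    by_cases hall : ∀ i : Fin (m+1),
        (if i = i₀ then f (w i).1 ≠ (w i).2 else f (w i).1 = (w i).2)
    · have h1 : (∏ i, (if i = i₀ then (if f (w i).1 ≠ (w i).2 then (1:ℝ≥0∞) else 0)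
          else (if f (w i).1 = (w i).2 then 1 else 0))) = 1 := by
        refine Finset.prod_eq_one fun i _ => ?_
        have := hall i
        by_cases h : i = i₀
        · rw [if_pos h]; rw [if_pos h] at this; rw [if_pos this]
        · rw [if_neg h]; rw [if_neg h] at this; rw [if_pos this]
      rw [h1]
      have hmis : σ (fun i => f (w i).1) ≠ σ (fun i => (w i).2) := by
        have h0 := hall i₀
        rw [if_pos rfl] at h0
        have hupd : (fun i => f (w i).1) =
            Function.update (fun i => (w i).2) i₀ (f (w i₀).1) := by
          funext i
          by_cases h : i = i₀
          · subst h; rw [Function.update_self]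
          · rw [Function.update_of_ne h]
            have := hall i
            rw [if_neg h] at this
            exact this
        rw [hupd]
        exact hi₀ (fun i => (w i).2) (f (w i₀).1) h0
      rw [if_pos hmis]
    · push_neg at hall
      obtain ⟨i, hi⟩ := hall
      have h0 : (∏ j, (if j = i₀ then (if f (w j).1 ≠ (w j).2 then (1:ℝ≥0∞) else 0)
          else (if f (w j).1 = (w j).2 then 1 else 0))) = 0 := by
        refine Finset.prod_eq_zero (Finset.mem_univ i) ?_
        by_cases h : i = i₀
        · rw [if_pos h]; rw [if_pos h] at hi
          rw [if_neg hi]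
        · rw [if_neg h]; rw [if_neg h] at hi
          rw [if_neg hi]
      rw [h0]
      exact zero_le
  -- Step E : R01 ≤ B
  have hRM : R01 ^ (m+1) ≤ (c : ℝ≥0∞) ^ (2 * (m+1) - 2) * RP := by
    have h1 : R01 ^ (m+1) ≤ (s.card : ℝ≥0∞) ^ m * ∑ p ∈ s, (q p) ^ (m+1) := by
      rw [hBsum]
      exact my_ennreal_pow_sum s q
        (fun p _ => ne_top_of_le_ne_top ENNReal.one_ne_top (hq_le p)) m
    have hcard : (s.card : ℝ≥0∞) ≤ (c : ℝ≥0∞) ^ 2 := by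
      have : s.card ≤ c ^ 2 := by
        calc s.card ≤ Fintype.card (Y × Y) := Finset.card_filter_le _ _ |>.trans
              (by rw [Finset.card_univ])
          _ = c ^ 2 := by rw [Fintype.card_prod, hc, sq]
      exact_mod_cast Nat.cast_le.mpr this
    have h2 : (s.card : ℝ≥0∞) ^ m * ∑ p ∈ s, (q p) ^ (m+1)
        ≤ ((c : ℝ≥0∞) ^ 2) ^ m * RP :=
      mul_le_mul' (pow_le_pow_left₀ (zero_le) hcard m) hC
    have h3 : ((c : ℝ≥0∞) ^ 2) ^ m = (c : ℝ≥0∞) ^ (2 * (m+1) - 2) := by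
      rw [← pow_mul]
      congr 1
    calc R01 ^ (m+1) ≤ _ := h1
      _ ≤ _ := h2
      _ = _ := by rw [h3]
  have hR01B : R01 ≤ B := by
    have h1 : R01 = (R01 ^ (m+1)) ^ (((m+1 : ℕ) : ℝ))⁻¹ := by
      rw [← ENNReal.rpow_natCast R01 (m+1), ← ENNReal.rpow_mul,
        mul_inv_cancel₀ (Nat.cast_ne_zero.mpr (Nat.succ_ne_zero m)),
        ENNReal.rpow_one]
    rw [h1, hB]
    exact ENNReal.rpow_le_rpow hRM (by positivity)
  -- assemble
  have hQB : 1 - B ≤ Q := by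
    calc 1 - B ≤ 1 - R01 := tsub_le_tsub_left hR01B 1
      _ ≤ Q := by
        rw [tsub_le_iff_right, ← hA]
  have key : R01 * (1 - B) ^ m ≤ RP :=
    le_trans (mul_le_mul_right (pow_le_pow_left₀ (zero_le) hQB m) R01) hD
  have hd0 : (1 - B) ^ m ≠ 0 := by
    apply pow_ne_zero
    exact (tsub_pos_iff_lt.mpr hden).ne'
  have hdtop : (1 - B) ^ m ≠ ∞ := by
    apply ENNReal.pow_ne_top
    exact ne_top_of_le_ne_top ENNReal.one_ne_top tsub_le_self
  have hgoal : R01 ≤ RP / (1 - B) ^ m := by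
    rw [ENNReal.le_div_iff_mul_le (Or.inl hd0) (Or.inl hdtop)]
    exact key
  simpa [Nat.add_sub_cancel] using hgoal
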